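/- Let X be a finite set, S a nilpotent subsemigroup of T(X) with zero e, and x ∈ im(e). Let I_x = e⁻¹(x). Then every β ∈ S maps I_x into I_x, and S_x = {β restricted to I_x : β ∈ S} is a nilpotent subsemigroup of T(I_x) whose zero is e restricted to I_x, which is the constant map with value x. -/

import Mathlib

/-- `S` is a subsemigroup of the full transformation semigroup on `X`
(maps act on the right, so the product `β·γ` is `γ ∘ β`). -/
def IsTransSub {X : Type*} (S : Set (X → X)) : Prop :=
  ∀ β ∈ S, ∀ γ ∈ S, (γ ∘ β) ∈ S

/-- `e` is a zero element of `S`: `βe = eβ = e` for all `β ∈ S`. -/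
def IsZeroElem {X : Type*} (S : Set (X → X)) (e : X → X) : Prop :=
  e ∈ S ∧ ∀ β ∈ S, e ∘ β = e ∧ β ∘ e = e

/-- `S` is nilpotent with zero `e`: some `m ≥ 1` such that every product of
`m` elements of `S` equals `e`. -/
def IsNilpotentSub {X : Type*} (S : Set (X → X)) (e : X → X) : Prop :=
  ∃ m : ℕ, 0 < m ∧ ∀ L : List (X → X), L.length = m → (∀ f ∈ L, f ∈ S) →
    L.foldr (· ∘ ·) id = e

/-- `S` is commutative. -/
def IsCommSub {X : Type*} (S : Set (X → X)) : Prop :=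
  ∀ β ∈ S, ∀ γ ∈ S, β ∘ γ = γ ∘ β

/-- `S` is a null semigroup with zero `e`: every product of two elements is `e`. -/
def IsNullSub {X : Type*} (S : Set (X → X)) (e : X → X) : Prop :=
  ∀ β ∈ S, ∀ γ ∈ S, γ ∘ β = e

/-- `ξ(n) = max { t ^ (n - t) : 1 ≤ t ≤ n }`. -/
def xi (n : ℕ) : ℕ := (Finset.Icc 1 n).sup (fun t => t ^ (n - t))

/-- `α(n) = max { t ∈ {1,…,n} : t ^ (n - t) = ξ(n) }`. -/
def alphaMax (n : ℕ) : ℕ :=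
  ((Finset.Icc 1 n).filter (fun t => t ^ (n - t) = xi n)).sup id

theorem stmt14 {X : Type*} [Fintype X]
    (S : Set (X → X)) (hS : IsTransSub S)
    (e : X → X) (he : IsZeroElem S e) (hnil : IsNilpotentSub S e)
    (x : X) (hx : x ∈ Set.range e) :
    (∀ β ∈ S, ∀ y : X, e y = x → e (β y) = x) ∧
    (let I := {y : X // e y = x}
     let Sx : Set (I → I) := {g | ∃ β ∈ S, ∀ y : I, (g y : X) = β (y : X)}
     IsTransSub Sx ∧
     ∃ eI ∈ Sx, (∀ y : I, (eI y : X) = x) ∧ IsZeroElem Sx eI ∧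
       IsNilpotentSub Sx eI) := by
  obtain ⟨heS, hzero⟩ := he
  have hee : e ∘ e = e := (hzero e heS).1
  have hinv : ∀ β ∈ S, ∀ y : X, e y = x → e (β y) = x := by
    intro β hβ y hy
    have h := congrFun (hzero β hβ).1 y
    simpa [hy] using h
  refine ⟨hinv, ?_⟩
  intro I Sx
  have heInv : ∀ y : I, e (e (y : X)) = x := by
    intro y
    have := congrFun hee (y : X)
    simpa [y.2] using this
  set eI : I → I := fun y => ⟨e (y : X), heInv y⟩ with heI
  have heISx : eI ∈ Sx := ⟨e, heS, fun y => rfl⟩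
  have heIconst : ∀ y : I, (eI y : X) = x := fun y => y.2
  have htrans : IsTransSub Sx := by
    rintro g ⟨β, hβ, hgβ⟩ h ⟨γ, hγ, hhγ⟩
    refine ⟨γ ∘ β, hS β hβ γ hγ, fun y => ?_⟩
    simp only [Function.comp_apply, hhγ, hgβ]
  refine ⟨htrans, eI, heISx, heIconst, ⟨heISx, ?_⟩, ?_⟩
  · -- zero element
    rintro g ⟨β, hβ, hgβ⟩
    constructor
    · funext y
      apply Subtype.ext
      show e ((g y : I) : X) = e (y : X)
      rw [hgβ y]
      exact congrFun (hzero β hβ).1 (y : X)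
    · funext y
      apply Subtype.ext
      show ((g (eI y) : I) : X) = e (y : X)
      rw [hgβ (eI y)]
      show β (e (y : X)) = e (y : X)
      exact congrFun (hzero β hβ).2 (y : X)
  · -- nilpotency
    obtain ⟨m, hm, hmul⟩ := hnil
    refine ⟨m, hm, ?_⟩
    intro L hlen hmem
    -- build a related list M in S
    have key : ∀ L : List (I → I), (∀ g ∈ L, g ∈ Sx) →
        ∃ M : List (X → X), M.length = L.length ∧ (∀ f ∈ M, f ∈ S) ∧
          ∀ y : I, ((L.foldr (· ∘ ·) id y : I) : X) = M.foldr (· ∘ ·) id (y : X) := by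
      intro L
      induction L with
      | nil => exact fun _ => ⟨[], rfl, by simp, fun y => rfl⟩
      | cons g L ih =>
        intro hall
        obtain ⟨M, hMlen, hMS, hMrel⟩ := ih (fun f hf => hall f (List.mem_cons_of_mem _ hf))
        obtain ⟨β, hβ, hgβ⟩ := hall g List.mem_cons_self
        refine ⟨β :: M, by simp [hMlen], ?_, ?_⟩
        · intro f hf
          rcases List.mem_cons.mp hf with h | h
          · exact h ▸ hβ
          · exact hMS f h
        · intro y
          show ((g (L.foldr (· ∘ ·) id y) : I) : X) = β (M.foldr (· ∘ ·) id (y : X))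
          rw [hgβ, hMrel]
    obtain ⟨M, hMlen, hMS, hMrel⟩ := key L hmem
    have hMfold : M.foldr (· ∘ ·) id = e := hmul M (hMlen.trans hlen) hMS
    funext y
    apply Subtype.ext
    rw [hMrel y, hMfold]
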